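/- A pair (R, Ω) ∈ SO(3) × ℝ³ is an equilibrium of the 3D pendulum equations (i.e., the right-hand sides of J Ω' = J Ω ×ᵥ Ω + m g ρ ×ᵥ Rᵀe₃ and R' = R S(Ω) vanish) if and only if Ω = 0 and Rᵀ e₃ is collinear with ρ, i.e., Rᵀ e₃ = ρ/‖ρ‖ or Rᵀ e₃ = −ρ/‖ρ‖. -/
import Mathlib

open Matrix

def hat (a : Fin 3 → ℝ) : Matrix (Fin 3) (Fin 3) ℝ :=
  !![0, -a 2, a 1; a 2, 0, -a 0; -a 1, a 0, 0]

def e₃ : Fin 3 → ℝ := ![0, 0, 1]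

lemma cross_zero_collinear (a b : Fin 3 → ℝ) (h : crossProduct a b = 0)
    (ha : a ≠ 0) (hb : b ⬝ᵥ b = 1) :
    b = (Real.sqrt (a ⬝ᵥ a))⁻¹ • a ∨ b = -((Real.sqrt (a ⬝ᵥ a))⁻¹ • a) := by
  have h0 := congrFun h 0
  have h1 := congrFun h 1
  have h2 := congrFun h 2
  simp [cross_apply] at h0 h1 h2
  have haa : 0 < a ⬝ᵥ a := by
    have hnn : 0 ≤ a ⬝ᵥ a := by
      simp only [dotProduct, Fin.sum_univ_three]
      nlinarith [sq_nonneg (a 0), sq_nonneg (a 1), sq_nonneg (a 2)]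
    have hne : a ⬝ᵥ a ≠ 0 := fun hz => ha (dotProduct_self_eq_zero.mp hz)
    exact lt_of_le_of_ne hnn (Ne.symm hne)
  set c := (a ⬝ᵥ b) / (a ⬝ᵥ a) with hc
  have hd : a ⬝ᵥ a ≠ 0 := ne_of_gt haa
  have hcb : b = c • a := by
    funext i
    simp only [Pi.smul_apply, smul_eq_mul, hc]
    rw [div_mul_eq_mul_div, eq_div_iff hd]
    fin_cases i
    · simp [dotProduct, Fin.sum_univ_three]
      linear_combination (-(a 1)) * h2 + a 2 * h1
    · simp [dotProduct, Fin.sum_univ_three]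
      linear_combination a 0 * h2 - a 2 * h0
    · simp [dotProduct, Fin.sum_univ_three]
      linear_combination (-(a 0)) * h1 + a 1 * h0
  have hc2 : c ^ 2 * (a ⬝ᵥ a) = 1 := by
    have : (c • a) ⬝ᵥ (c • a) = 1 := by rw [← hcb]; exact hb
    simpa [smul_dotProduct, dotProduct_smul, smul_eq_mul, sq, mul_assoc] using this
  have hs : 0 < Real.sqrt (a ⬝ᵥ a) := Real.sqrt_pos.mpr haa
  have hsq : Real.sqrt (a ⬝ᵥ a) ^ 2 = a ⬝ᵥ a := Real.sq_sqrt haa.le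
  have hcs : (c * Real.sqrt (a ⬝ᵥ a)) * (c * Real.sqrt (a ⬝ᵥ a)) = 1 := by
    nlinarith [hc2, hsq]
  rcases mul_self_eq_one_iff.mp hcs with h' | h'
  · left
    rw [hcb]
    congr 1
    rw [eq_div_of_mul_eq hs.ne' h', one_div]
  · right
    rw [hcb, ← neg_smul]
    congr 1
    rw [eq_div_of_mul_eq hs.ne' h', neg_div, one_div]

lemma hat_zero : hat 0 = 0 := by
  ext i j
  fin_cases i <;> fin_cases j <;> simp [hat, Matrix.vecHead, Matrix.vecTail]

/-- Characterization of the equilibria of the 3D pendulum. -/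
theorem pendulum_equilibria (J : Matrix (Fin 3) (Fin 3) ℝ)
    (hJsym : Jᵀ = J) (hJ : J.PosDef) (m g : ℝ) (hm : 0 < m) (hg : 0 < g)
    (ρ : Fin 3 → ℝ) (hρ : ρ ≠ 0)
    (R : Matrix (Fin 3) (Fin 3) ℝ) (hR : Rᵀ * R = 1) (hdet : R.det = 1)
    (Ω : Fin 3 → ℝ) :
    (crossProduct (J.mulVec Ω) Ω + (m * g) • crossProduct ρ (Rᵀ.mulVec e₃) = 0 ∧
        R * hat Ω = 0) ↔
      (Ω = 0 ∧ (Rᵀ.mulVec e₃ = (Real.sqrt (ρ ⬝ᵥ ρ))⁻¹ • ρ ∨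
        Rᵀ.mulVec e₃ = -((Real.sqrt (ρ ⬝ᵥ ρ))⁻¹ • ρ))) := by
  constructor
  · rintro ⟨heq, hrot⟩
    have hhat : hat Ω = 0 := by
      calc hat Ω = (Rᵀ * R) * hat Ω := by rw [hR, one_mul]
        _ = Rᵀ * (R * hat Ω) := by rw [mul_assoc]
        _ = 0 := by rw [hrot, mul_zero]
    have hΩ : Ω = 0 := by
      funext i
      have h01 := congrFun (congrFun hhat 0) 1
      have h02 := congrFun (congrFun hhat 0) 2
      have h12 := congrFun (congrFun hhat 1) 2
      simp [hat] at h01 h02 h12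
      fin_cases i <;> simp [h01, h02, h12]
    subst hΩ
    have hcross : crossProduct ρ (Rᵀ.mulVec e₃) = 0 := by
      have h : (m * g) • crossProduct ρ (Rᵀ.mulVec e₃) = 0 := by
        simpa using heq
      have hmg : m * g ≠ 0 := by positivity
      exact (smul_eq_zero.mp h).resolve_left hmg
    have hRRT : R * Rᵀ = 1 := mul_eq_one_comm.mp hR
    have hunit : (Rᵀ.mulVec e₃) ⬝ᵥ (Rᵀ.mulVec e₃) = 1 := by
      have h22 := congrFun (congrFun hRRT 2) 2
      simp [Matrix.mul_apply, Fin.sum_univ_three] at h22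
      simp [Matrix.mulVec, dotProduct, e₃, Fin.sum_univ_three, Matrix.transpose_apply]
      linarith
    exact ⟨rfl, cross_zero_collinear ρ _ hcross hρ hunit⟩
  · rintro ⟨rfl, hv⟩
    refine ⟨?_, by rw [hat_zero, mul_zero]⟩
    have h1 : crossProduct (J.mulVec 0) (0 : Fin 3 → ℝ) = 0 := by
      rw [Matrix.mulVec_zero]; exact cross_self 0
    have h2 : crossProduct ρ (Rᵀ.mulVec e₃) = 0 := by
      rcases hv with h | h <;> rw [h] <;>
        simp [_root_.map_smul, _root_.map_neg, cross_self]
    rw [h1, h2, smul_zero, add_zero]
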